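/- Let E be an interior edge shared by two triangles T₊, T₋ and let ω_E = T₊ ∪ T₋. Define the lifting L_E⁰(φ) ∈ P₀(T(E))², for φ ∈ L²(E)², as the unique piecewise-constant vector field on {T₊, T₋} with ∫_{ω_E} L_E⁰(φ)·τ̄ dx = ∫_E φ·{τ̄} ds for all piecewise-constant vector fields τ on {T₊, T₋}, where {τ} = ½(τ|_{T₊} + τ|_{T₋}). Then for T ∈ {T₊, T₋}, ‖L_E⁰(φ)‖_{0,T} ≤ C·h_E^{-1/2}·‖Π_E⁰ φ‖_{0,E}, where C = h_E·max{|T₊|^{-1/2}, |T₋|^{-1/2}} and Π_E⁰ is the L² projection onto constants on E. -/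

import Mathlib

/- STATEMENT 8: stability of the lifting L_E⁰: for T ∈ {T₊,T₋},
   ‖L_E⁰(φ)‖_{0,T} ≤ C·h_E^{-1/2}·‖Π_E⁰φ‖_{0,E}, C = h_E·max{|T₊|^{-1/2},|T₋|^{-1/2}}. -/

open MeasureTheory Complex Finset
noncomputable section

abbrev E2 := EuclideanSpace ℝ (Fin 2)
abbrev C2 := EuclideanSpace ℂ (Fin 2)

/-- complex ℓ²-pairing on ℂ², linear in the first and conjugate-linear in the second slot -/
def dot2 (a b : C2) : ℂ := ∑ i, a i * (starRingEnd ℂ) (b i)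

lemma tri_vol_pos (A B P : E2) (h : AffineIndependent ℝ ![A, B, P]) :
    0 < (volume (convexHull ℝ ({A, B, P} : Set E2))).toReal := by
  have hrange : Set.range ![A, B, P] = ({A, B, P} : Set E2) := by
    simp [Matrix.range_cons, Matrix.range_empty]; ext x; simp; tauto
  have hspan : affineSpan ℝ ({A, B, P} : Set E2) = ⊤ := by
    rw [← hrange]
    exact h.affineSpan_eq_top_iff_card_eq_finrank_add_one.2 (by simp [finrank_euclideanSpace_fin])
  have hconv : Convex ℝ (convexHull ℝ ({A, B, P} : Set E2)) := convex_convexHull _ _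
  have hint : (interior (convexHull ℝ ({A, B, P} : Set E2))).Nonempty := by
    rw [hconv.interior_nonempty_iff_affineSpan_eq_top, affineSpan_convexHull]
    exact hspan
  have hpos : 0 < volume (convexHull ℝ ({A, B, P} : Set E2)) :=
    (isOpen_interior.measure_pos volume hint).trans_le (measure_mono interior_subset)
  have hfin : volume (convexHull ℝ ({A, B, P} : Set E2)) ≠ ⊤ :=
    ((Set.toFinite _).isCompact_convexHull (𝕜 := ℝ)).measure_ne_top
  exact ENNReal.toReal_pos hpos.ne' hfin


theorem lifting_L0_stability
    (A B P Q : E2)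
    (hP : AffineIndependent ℝ ![A, B, P]) (hQ : AffineIndependent ℝ ![A, B, Q])
    -- the two triangles T₊, T₋ sharing the edge E = [A,B]
    (Tp Tm : Set E2) (hTp : Tp = convexHull ℝ {A, B, P}) (hTm : Tm = convexHull ℝ {A, B, Q})
    (Eset : Set E2) (hEset : Eset = segment ℝ A B)
    (νE : Measure E2) (hνE : νE = (μH[1]).restrict Eset)
    (hE : ℝ) (hhE : hE = dist A B)
    (volTp volTm : ℝ) (hvolp : volTp = (volume Tp).toReal) (hvolm : volTm = (volume Tm).toReal)
    -- jump data φ ∈ L²(E)²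
    (φ : E2 → C2) (hφ : Integrable (fun x => ‖φ x‖ ^ 2) νE) (hφi : Integrable φ νE)
    -- the piecewise-constant lifting L_E⁰(φ), with values cp on T₊ and cm on T₋
    (cp cm : C2)
    -- defining property: ∫_{ω_E} L_E⁰(φ)·τ̄ dx = ∫_E φ·{τ̄} ds for all piecewise
    -- constants τ (with value τp on T₊ and τm on T₋), {τ} = ½(τ|_{T₊} + τ|_{T₋})
    (hdef : ∀ τp τm : C2,
      (volTp : ℂ) * dot2 cp τp + (volTm : ℂ) * dot2 cm τm =
        ∫ x, dot2 (φ x) ((1/2 : ℂ) • (τp + τm)) ∂νE)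
    -- Π_E⁰ φ : the mean value of φ on E
    (Piφ : C2) (hPiφ : Piφ = (hE : ℝ)⁻¹ • ∫ x, φ x ∂νE)
    (C : ℝ) (hC : C = hE * max (volTp ^ (-(1:ℝ)/2)) (volTm ^ (-(1:ℝ)/2))) :
    -- ‖L_E⁰(φ)‖_{0,T} ≤ C·h_E^{-1/2}·‖Π_E⁰φ‖_{0,E} for T = T₊ and T = T₋
    Real.sqrt volTp * ‖cp‖ ≤ C * hE ^ (-(1:ℝ)/2) * (Real.sqrt hE * ‖Piφ‖) ∧
      Real.sqrt volTm * ‖cm‖ ≤ C * hE ^ (-(1:ℝ)/2) * (Real.sqrt hE * ‖Piφ‖) := by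
  have hAB : A ≠ B := by
    have := hP.injective.ne (show (0 : Fin 3) ≠ 1 by decide)
    simpa using this
  have hE0 : 0 < hE := hhE ▸ dist_pos.2 hAB
  have hvp : 0 < volTp := by rw [hvolp, hTp]; exact tri_vol_pos A B P hP
  have hvm : 0 < volTm := by rw [hvolm, hTm]; exact tri_vol_pos A B Q hQ
  have hdot : ∀ (a b : C2), dot2 a b = @inner ℂ _ _ b a := by
    intro a b
    simp [dot2, PiLp.inner_apply, RCLike.inner_apply, mul_comm]
  have hint : (∫ x, φ x ∂νE) = (hE : ℝ) • Piφ := by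
    rw [hPiφ, smul_smul, mul_inv_cancel₀ hE0.ne', one_smul]
  -- main estimate
  have main : ∀ (v : ℝ) (c : C2), 0 < v →
      ((v : ℂ) * dot2 c c = ∫ x, dot2 (φ x) ((1/2 : ℂ) • (c + 0)) ∂νE) →
      v * ‖c‖ ≤ (1/2) * hE * ‖Piφ‖ := by
    intro v c hv h1
    have h2 : (∫ x, dot2 (φ x) ((1/2 : ℂ) • (c + 0)) ∂νE)
        = (1/2 : ℂ) * @inner ℂ _ _ c (∫ x, φ x ∂νE) := by
      have hpt : ∀ x : E2, dot2 (φ x) ((1/2 : ℂ) • (c + 0)) = (1/2 : ℂ) * @inner ℂ _ _ c (φ x) := by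
        intro x
        simp only [add_zero, dot2, PiLp.inner_apply, RCLike.inner_apply, PiLp.smul_apply,
          smul_eq_mul, map_mul, Finset.mul_sum]
        congr 1; ext i
        rw [map_div₀, map_one, map_ofNat]
        ring
      rw [integral_congr_ae (Filter.Eventually.of_forall hpt),
        MeasureTheory.integral_const_mul, integral_inner hφi]
    have h3 : (v : ℂ) * (‖c‖ : ℂ) ^ 2 = (1/2 : ℂ) * (hE : ℂ) * @inner ℂ _ _ c Piφ := by
      have hc : dot2 c c = (‖c‖ : ℂ) ^ 2 := by
        rw [hdot]; exact inner_self_eq_norm_sq_to_K c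
      have hsm : (hE : ℝ) • Piφ = ((hE : ℂ)) • Piφ := by
        ext i; simp [Complex.real_smul]
      rw [← hc, h1, h2, hint, hsm, inner_smul_right]
      ring
    have h4 : v * ‖c‖ ^ 2 ≤ (1/2) * hE * (‖c‖ * ‖Piφ‖) := by
      have hn := congrArg (fun z : ℂ => ‖z‖) h3
      simp only [norm_mul, norm_pow, norm_div, norm_one, Complex.norm_real, Complex.norm_ofNat,
        Real.norm_eq_abs, abs_of_pos hv, abs_of_pos hE0, abs_norm] at hn
      have hb : ‖(@inner ℂ _ _ c Piφ)‖ ≤ ‖c‖ * ‖Piφ‖ := by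
        exact norm_inner_le_norm c Piφ
      have hnn : (0:ℝ) ≤ ‖c‖ ^ 2 := sq_nonneg _
      nlinarith [hn, hb, hE0.le]
    rcases eq_or_lt_of_le (norm_nonneg c) with h0 | h0
    · rw [← h0, mul_zero]; positivity
    · nlinarith [h4, h0]
  -- derive the two instances
  have hp1 : (volTp : ℂ) * dot2 cp cp = ∫ x, dot2 (φ x) ((1/2 : ℂ) • (cp + 0)) ∂νE := by
    have := hdef cp 0
    simpa [dot2] using this
  have hm1 : (volTm : ℂ) * dot2 cm cm = ∫ x, dot2 (φ x) ((1/2 : ℂ) • (cm + 0)) ∂νE := by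
    have := hdef 0 cm
    simpa [dot2, zero_add, add_zero] using this
  have bp := main volTp cp hvp hp1
  have bm := main volTm cm hvm hm1
  -- rewrite the right-hand side
  have hsE : Real.sqrt hE = hE ^ ((1:ℝ)/2) := Real.sqrt_eq_rpow hE
  have hrw : C * hE ^ (-(1:ℝ)/2) * (Real.sqrt hE * ‖Piφ‖) = C * ‖Piφ‖ := by
    rw [hsE, show (-(1:ℝ)/2) = -((1:ℝ)/2) by ring, Real.rpow_neg hE0.le]
    have h0 : hE ^ ((1:ℝ)/2) ≠ 0 := (Real.rpow_pos_of_pos hE0 _).ne'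
    field_simp
  rw [hrw]
  have hCb : ∀ (v : ℝ) (c : C2), 0 < v → v * ‖c‖ ≤ (1/2) * hE * ‖Piφ‖ →
      v ^ (-(1:ℝ)/2) ≤ max (volTp ^ (-(1:ℝ)/2)) (volTm ^ (-(1:ℝ)/2)) →
      Real.sqrt v * ‖c‖ ≤ C * ‖Piφ‖ := by
    intro v c hv hb hmax
    have hsv : 0 < Real.sqrt v := Real.sqrt_pos.2 hv
    have hvr : v ^ (-(1:ℝ)/2) = (Real.sqrt v)⁻¹ := by
      rw [show (-(1:ℝ)/2) = -((1:ℝ)/2) by ring, Real.rpow_neg hv.le, ← Real.sqrt_eq_rpow]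
    have step1 : Real.sqrt v * ‖c‖ ≤ hE * (Real.sqrt v)⁻¹ * ‖Piφ‖ := by
      rw [show hE * (Real.sqrt v)⁻¹ * ‖Piφ‖ = (hE * ‖Piφ‖) / Real.sqrt v by ring,
        le_div_iff₀ hsv]
      nlinarith [Real.sq_sqrt hv.le, hb, mul_nonneg hE0.le (norm_nonneg Piφ)]
    calc Real.sqrt v * ‖c‖ ≤ hE * (Real.sqrt v)⁻¹ * ‖Piφ‖ := step1
      _ ≤ C * ‖Piφ‖ := by
          rw [hC, ← hvr]
          have := mul_le_mul_of_nonneg_left hmax hE0.le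
          exact mul_le_mul_of_nonneg_right (by linarith [this]) (norm_nonneg Piφ)
  exact ⟨hCb volTp cp hvp bp (le_max_left _ _), hCb volTm cm hvm bm (le_max_right _ _)⟩
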